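/- Let Σ be an n-simplex with vertices a₁,…,a_{n+1} in a real normed space X, and let c be a relative interior point of Σ. There exists δ > 0 such that whenever x₁,…,x_{n+1} ∈ aff(Σ) satisfy ‖xₖ − aₖ‖ < δ for each k, the points x₁,…,x_{n+1} are affinely independent and c is a relative interior point of the n-simplex co{x₁,…,x_{n+1}}. -/

import Mathlib

set_option maxHeartbeats 1000000

open Set Finset

lemma aux_exists_pi {X : Type*} [NormedAddCommGroup X] [NormedSpace ℝ X] {n : ℕ}
    (v : Fin n → X) (hind : LinearIndependent ℝ v) :
    ∃ π : X →L[ℝ] (Fin n → ℝ), ∀ k, π (v k) = Pi.single k 1 := by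
  classical
  haveI : FiniteDimensional ℝ (Submodule.span ℝ (Set.range v)) :=
    FiniteDimensional.span_of_finite ℝ (Set.finite_range v)
  let B : Module.Basis (Fin n) ℝ (Submodule.span ℝ (Set.range v)) := Module.Basis.span hind
  have hcoord : ∀ j : Fin n, ∃ g : X →L[ℝ] ℝ,
      ∀ u : Submodule.span ℝ (Set.range v), g u = B.coord j u := by
    intro j
    let f : (Submodule.span ℝ (Set.range v)) →L[ℝ] ℝ :=
      LinearMap.toContinuousLinearMap (B.coord j)
    obtain ⟨g, hg, -⟩ := exists_extension_norm_eq (Submodule.span ℝ (Set.range v)) f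
    exact ⟨g, fun u => hg u⟩
  choose g hg using hcoord
  refine ⟨ContinuousLinearMap.pi g, fun k => ?_⟩
  ext j
  have hv : v k = ((B k : Submodule.span ℝ (Set.range v)) : X) := congrArg Subtype.val (Module.Basis.span_apply hind k).symm
  simp only [ContinuousLinearMap.pi_apply, hv]
  rw [hg j]
  simp [B, Module.Basis.coord_apply, Finsupp.single_apply, Pi.single_apply, eq_comm]

theorem simplex_vertex_perturbation
    {X : Type*} [NormedAddCommGroup X] [NormedSpace ℝ X] {n : ℕ}
    (a : Fin (n + 1) → X)
    (hind : LinearIndependent ℝ fun k : Fin n => a k.castSucc - a (Fin.last n))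
    (c : X)
    (hc : ∃ r > (0 : ℝ), Metric.ball c r ∩ (affineSpan ℝ (Set.range a) : Set X)
        ⊆ convexHull ℝ (Set.range a)) :
    ∃ δ > (0 : ℝ), ∀ x : Fin (n + 1) → X,
      (∀ k, x k ∈ affineSpan ℝ (Set.range a)) →
      (∀ k, ‖x k - a k‖ < δ) →
      (LinearIndependent ℝ fun k : Fin n => x k.castSucc - x (Fin.last n)) ∧
      ∃ r > (0 : ℝ), Metric.ball c r ∩ (affineSpan ℝ (Set.range x) : Set X)
        ⊆ convexHull ℝ (Set.range x) := by
  classical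
  set v : Fin n → X := fun k => a k.castSucc - a (Fin.last n) with hv
  obtain ⟨π, hπ⟩ := aux_exists_pi v hind
  set V : Submodule ℝ X := Submodule.span ℝ (Set.range v) with hV
  set P : AffineSubspace ℝ X := affineSpan ℝ (Set.range a) with hP
  haveI : FiniteDimensional ℝ V := FiniteDimensional.span_of_finite ℝ (Set.finite_range v)
  -- membership in P
  have halast : a (Fin.last n) ∈ P := mem_affineSpan ℝ (Set.mem_range_self _)
  have hvmem : ∀ j, v j ∈ V := fun j => Submodule.subset_span (Set.mem_range_self _)
  have hakmem : ∀ k, a k - a (Fin.last n) ∈ V := by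
    intro k
    induction k using Fin.lastCases with
    | last => simp
    | cast j => exact hvmem j
  have hdir : P.direction = V := by
    rw [hP, direction_affineSpan, vectorSpan_range_eq_span_range_vsub_right ℝ a (Fin.last n)]
    refine le_antisymm (Submodule.span_le.2 ?_) (Submodule.span_le.2 ?_)
    · rintro _ ⟨i, rfl⟩
      simpa [vsub_eq_sub] using hakmem i
    · rintro _ ⟨j, rfl⟩
      exact Submodule.subset_span ⟨j.castSucc, by simp [vsub_eq_sub, hv]⟩
  have hmemP : ∀ y : X, y ∈ P ↔ y - a (Fin.last n) ∈ V := by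
    intro y
    rw [← hdir]
    constructor
    · intro h
      simpa [vsub_eq_sub] using AffineSubspace.vsub_mem_direction h halast
    · intro h
      exact (AffineSubspace.vsub_right_mem_direction_iff_mem halast y).1 (by simpa [vsub_eq_sub] using h)
  -- coordinate representation on V
  have hrep : ∀ u ∈ V, ∑ j, (π u j) • v j = u := by
    intro u hu
    induction hu using Submodule.span_induction with
    | mem z hz =>
      obtain ⟨k, rfl⟩ := hz
      rw [hπ k]
      simp [Pi.single_apply, ite_smul]
    | zero => simp
    | add z w hz hw ihz ihw =>
      simp only [map_add, Pi.add_apply, add_smul, Finset.sum_add_distrib, ihz, ihw]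
    | smul r z hz ih =>
      simp only [map_smul, Pi.smul_apply, smul_eq_mul, mul_smul, ← Finset.smul_sum, ih]
  have hinjV : ∀ u ∈ V, π u = 0 → u = 0 := by
    intro u hu h0
    rw [← hrep u hu, h0]
    simp
  -- the matrix machinery
  set N : (Fin (n+1) → X) → Matrix (Fin n) (Fin n) ℝ :=
    fun x => Matrix.of fun i j => π (x j.castSucc - x (Fin.last n)) i with hN
  set uu : (Fin (n+1) → X) → X → (Fin n → ℝ) :=
    fun x y => (N x).det⁻¹ • (N x).adjugate.mulVec (π (y - x (Fin.last n))) with huu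
  set W : (Fin (n+1) → X) → X → (Fin (n+1) → ℝ) :=
    fun x y => Fin.snoc (uu x y) (1 - ∑ j, uu x y j) with hW
  have hNa : N a = 1 := by
    ext i j
    simp only [hN, Matrix.of_apply]
    rw [show a j.castSucc - a (Fin.last n) = v j from rfl, hπ]
    simp [Matrix.one_apply, Pi.single_apply, eq_comm]
  have hWsum : ∀ x y, ∑ k, W x y k = 1 := by
    intro x y
    rw [Fin.sum_univ_castSucc]
    simp only [hW, Fin.snoc_castSucc, Fin.snoc_last]
    ring
  -- A: representation lemma
  have hA : ∀ x : Fin (n+1) → X, (∀ k, x k ∈ P) → (N x).det ≠ 0 →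
      ∀ y ∈ P, ∑ k, W x y k • x k = y := by
    intro x hxP hdet y hyP
    have hxV : ∀ j : Fin n, x j.castSucc - x (Fin.last n) ∈ V := by
      intro j
      have h1 := (hmemP _).1 (hxP j.castSucc)
      have h2 := (hmemP _).1 (hxP (Fin.last n))
      simpa using V.sub_mem h1 h2
    have hyV : y - x (Fin.last n) ∈ V := by
      have h1 := (hmemP _).1 hyP
      have h2 := (hmemP _).1 (hxP (Fin.last n))
      simpa using V.sub_mem h1 h2
    have hkey : ∑ j, uu x y j • (x j.castSucc - x (Fin.last n)) = y - x (Fin.last n) := by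
      have hmem1 : ∑ j, uu x y j • (x j.castSucc - x (Fin.last n)) ∈ V :=
        Submodule.sum_mem _ fun j _ => V.smul_mem _ (hxV j)
      have hdiff : (∑ j, uu x y j • (x j.castSucc - x (Fin.last n))) - (y - x (Fin.last n)) ∈ V :=
        V.sub_mem hmem1 hyV
      have hπeq : π (∑ j, uu x y j • (x j.castSucc - x (Fin.last n))) = π (y - x (Fin.last n)) := by
        have hmv : π (∑ j, uu x y j • (x j.castSucc - x (Fin.last n)))
            = (N x).mulVec (uu x y) := by
          ext i
          simp [map_sum, map_smul, Matrix.mulVec, dotProduct, hN, mul_comm]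
        rw [hmv, huu, Matrix.mulVec_smul, Matrix.mulVec_mulVec, Matrix.mul_adjugate,
          Matrix.smul_mulVec, Matrix.one_mulVec, smul_smul,
          inv_mul_cancel₀ hdet, one_smul]
      have := hinjV _ hdiff (by rw [map_sub, hπeq, sub_self])
      exact sub_eq_zero.1 this
    have hkey' : ∑ j, uu x y j • x j.castSucc - ∑ j, uu x y j • x (Fin.last n)
        = y - x (Fin.last n) := by
      simpa [smul_sub, Finset.sum_sub_distrib] using hkey
    calc ∑ k, W x y k • x k
        = (∑ j, uu x y j • x j.castSucc - ∑ j, uu x y j • x (Fin.last n)) + x (Fin.last n) := by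
          rw [Fin.sum_univ_castSucc]
          simp only [hW, Fin.snoc_castSucc, Fin.snoc_last, sub_smul, one_smul, Finset.sum_smul]
          abel
      _ = y := by rw [hkey']; abel
  -- linear independence from det ≠ 0
  have hLI : ∀ x : Fin (n+1) → X, (N x).det ≠ 0 →
      LinearIndependent ℝ fun k : Fin n => x k.castSucc - x (Fin.last n) := by
    intro x hdet
    rw [Fintype.linearIndependent_iff]
    intro g hg
    have hNg : (N x).mulVec g = 0 := by
      ext i
      have := congrArg (fun z => π z i) hg
      simpa [map_sum, map_smul, Matrix.mulVec, dotProduct, hN, mul_comm] using this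
    have hdg : (N x).det • g = 0 := by
      have h := congrArg (fun w => (N x).adjugate.mulVec w) hNg
      simpa [Matrix.mulVec_mulVec, Matrix.adjugate_mul, Matrix.smul_mulVec,
        Matrix.one_mulVec] using h
    have : g = 0 := (smul_eq_zero.mp hdg).resolve_left hdet
    intro i
    rw [this]
    rfl
  -- B: uniqueness of coordinates w.r.t. a
  have hB : ∀ (w : Fin (n+1) → ℝ) (y : X), ∑ k, w k = 1 → ∑ k, w k • a k = y →
      W a y = w := by
    intro w y hw hsum
    have hy : y - a (Fin.last n) = ∑ j, w j.castSucc • v j := by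
      have e1 : y - a (Fin.last n) = ∑ k, w k • (a k - a (Fin.last n)) := by
        rw [← hsum]
        simp only [smul_sub, Finset.sum_sub_distrib, ← Finset.sum_smul, hw, one_smul]
      rw [e1, Fin.sum_univ_castSucc]
      simp [hv]
    have hcoord : ∀ j, π (y - a (Fin.last n)) j = w j.castSucc := by
      intro j
      rw [hy]
      simp [map_sum, map_smul, hπ, Pi.single_apply]
    have huay : uu a y = π (y - a (Fin.last n)) := by
      simp [huu, hNa, Matrix.adjugate_one, Matrix.det_one, Matrix.one_mulVec]
    funext k
    induction k using Fin.lastCases with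
    | last =>
      have hw' : w (Fin.last n) = 1 - ∑ j : Fin n, w j.castSucc := by
        rw [Fin.sum_univ_castSucc] at hw
        linarith
      simp only [hW, Fin.snoc_last, huay, hw']
      congr 1
      exact Finset.sum_congr rfl fun j _ => hcoord j
    | cast j =>
      simp only [hW, Fin.snoc_castSucc, huay]
      exact hcoord j
  -- continuity / eventual statements
  have hNcont : Continuous fun x : Fin (n+1) → X => N x := by
    apply continuous_matrix
    intro i j
    exact (continuous_apply i).comp
      (π.continuous.comp ((continuous_apply _).sub (continuous_apply _)))
  have h1 : ∀ᶠ x : Fin (n+1) → X in nhds a, (N x).det ≠ 0 := by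
    have hdc : Continuous fun x : Fin (n+1) → X => (N x).det := hNcont.matrix_det
    refine hdc.continuousAt.eventually_ne ?_
    rw [hNa, Matrix.det_one]
    exact one_ne_zero
  -- closedness of P
  have hPclosed : IsClosed (P : Set X) := by
    have he : (P : Set X) = (fun y => y - a (Fin.last n)) ⁻¹' (V : Set X) := by
      ext y
      simpa using hmemP y
    rw [he]
    exact (Submodule.closed_of_finiteDimensional V).preimage (continuous_id.sub continuous_const)
  by_cases hcP : c ∈ P
  · -- main case
    obtain ⟨r, hr, hsub⟩ := hc
    have hdeta : (N a).det ≠ 0 := by rw [hNa, Matrix.det_one]; exact one_ne_zero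
    have haP : ∀ k, a k ∈ P := fun k => mem_affineSpan ℝ (Set.mem_range_self _)
    have hAc : ∑ k, W a c k • a k = c := hA a haP hdeta c hcP
    have hWak : ∀ k : Fin (n+1), W a (a k) = Pi.single k 1 := by
      intro k
      refine hB (Pi.single k 1) (a k) (by simp) ?_
      simp [Pi.single_apply, ite_smul]
    have hq : ∀ y, y ∈ Metric.ball c r → y ∈ P → ∀ k, 0 ≤ W a y k := by
      intro y hyb hyP k
      have hyH : y ∈ convexHull ℝ (Set.range a) := hsub ⟨hyb, hyP⟩
      rw [convexHull_range_eq_exists_affineCombination] at hyH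
      obtain ⟨s, w, hw0, hw1, hwy⟩ := hyH
      set w' : Fin (n+1) → ℝ := fun i => if i ∈ s then w i else 0 with hw'
      have hw'0 : ∀ i, 0 ≤ w' i := by
        intro i
        simp only [hw']
        split
        · exact hw0 i ‹_›
        · exact le_refl 0
      have hw'1 : ∑ i, w' i = 1 := by
        rw [← hw1]
        simp [hw', Finset.sum_ite_mem]
      have hcomb : ∑ i, w' i • a i = y := by
        rw [← hwy, affineCombination_eq_linear_combination s a w hw1]
        simp [hw', ite_smul, Finset.sum_ite_mem]
      have := hB w' y hw'1 hcomb
      rw [this]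
      exact hw'0 k
    have hpos : ∀ k, 0 < W a c k := by
      intro k
      set t : ℝ := r / (2 * (‖c - a k‖ + 1)) with ht
      have hden : (0:ℝ) < ‖c - a k‖ + 1 := by positivity
      have ht0 : 0 < t := by positivity
      set y := c + t • (c - a k) with hy
      have hyb : y ∈ Metric.ball c r := by
        have h1 : t * (‖c - a k‖ + 1) = r / 2 := by
          rw [ht]; field_simp
        have h2 : t * ‖c - a k‖ < r := by nlinarith [norm_nonneg (c - a k)]
        simp only [Metric.mem_ball, hy, dist_eq_norm]
        calc ‖c + t • (c - a k) - c‖ = ‖t • (c - a k)‖ := by congr 1; abel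
          _ = t * ‖c - a k‖ := by rw [norm_smul, Real.norm_eq_abs, abs_of_pos ht0]
          _ < r := h2
      have hcV : c - a (Fin.last n) ∈ V := (hmemP c).1 hcP
      have hcak : c - a k ∈ V := by
        simpa using V.sub_mem hcV (hakmem k)
      have hyP : y ∈ P := by
        rw [hmemP]
        have he : y - a (Fin.last n) = (c - a (Fin.last n)) + t • (c - a k) := by
          rw [hy]; abel
        rw [he]
        exact V.add_mem hcV (V.smul_mem _ hcak)
      have h0 := hq y hyb hyP k
      -- affine formula via uniqueness
      set w : Fin (n+1) → ℝ := fun i => (1 + t) * W a c i - t * (Pi.single k (1:ℝ) : Fin (n+1) → ℝ) i with hwdef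
      have hwsum : ∑ i, w i = 1 := by
        simp only [hwdef, Finset.sum_sub_distrib, ← Finset.mul_sum, hWsum a c]
        simp
      have hwcomb : ∑ i, w i • a i = y := by
        have e1 : ∑ i, w i • a i
            = (1 + t) • ∑ i, W a c i • a i - t • ∑ i, (Pi.single k (1:ℝ) : Fin (n+1) → ℝ) i • a i := by
          simp only [hwdef, sub_smul, mul_smul, Finset.sum_sub_distrib, Finset.smul_sum]
        rw [e1, hAc]
        have e2 : ∑ i, (Pi.single k (1:ℝ) : Fin (n+1) → ℝ) i • a i = a k := by
          simp [Pi.single_apply, ite_smul]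
        rw [e2, hy]
        rw [add_smul, one_smul, smul_sub]
        abel
      have hWy := hB w y hwsum hwcomb
      have hWyk : W a y k = (1 + t) * W a c k - t := by
        rw [hWy, hwdef]
        simp
      rw [hWyk] at h0
      nlinarith
    have hNc : Continuous fun p : (Fin (n+1) → X) × X => N p.1 := hNcont.comp continuous_fst
    have hzc : Continuous fun p : (Fin (n+1) → X) × X => π (p.2 - p.1 (Fin.last n)) :=
      π.continuous.comp (continuous_snd.sub ((continuous_apply _).comp continuous_fst))
    have hdinv : ContinuousAt (fun p : (Fin (n+1) → X) × X => (N p.1).det⁻¹) (a, c) :=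
      (hNc.matrix_det.continuousAt).inv₀ (by rw [hNa, Matrix.det_one]; exact one_ne_zero)
    have huc : ContinuousAt (fun p : (Fin (n+1) → X) × X => uu p.1 p.2) (a, c) := by
      simp only [huu]
      exact hdinv.smul (hNc.matrix_adjugate.matrix_mulVec hzc).continuousAt
    have h2 : ∀ k, ∀ᶠ p : (Fin (n+1) → X) × X in nhds (a, c), 0 < W p.1 p.2 k := by
      intro k
      have hcont : ContinuousAt (fun p : (Fin (n+1) → X) × X => W p.1 p.2 k) (a, c) := by
        induction k using Fin.lastCases with
        | last =>
          simp only [hW, Fin.snoc_last]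
          exact continuousAt_const.sub
            (tendsto_finset_sum Finset.univ fun j _ => (continuous_apply j).continuousAt.comp huc)
        | cast j =>
          simp only [hW, Fin.snoc_castSucc]
          exact (continuous_apply j).continuousAt.comp huc
      exact hcont (Ioi_mem_nhds (hpos k))
    have hev : ∀ᶠ p : (Fin (n+1) → X) × X in nhds (a, c),
        (N p.1).det ≠ 0 ∧ ∀ k, 0 < W p.1 p.2 k :=
      ((continuous_fst.tendsto _).eventually h1).and (Filter.eventually_all.mpr h2)
    rw [Metric.eventually_nhds_iff] at hev
    obtain ⟨ε, hε, hball⟩ := hev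
    refine ⟨ε/2, by positivity, fun x hxP hxa => ?_⟩
    have hdx : ∀ y : X, dist y c < ε/2 → (N x).det ≠ 0 ∧ ∀ k, 0 < W x y k := by
      intro y hy
      have hd : dist ((x, y) : (Fin (n+1) → X) × X) ((a, c)) < ε := by
        rw [Prod.dist_eq]
        have hxa' : dist x a < ε / 2 :=
          (dist_pi_lt_iff (half_pos hε)).2 fun k => by simpa [dist_eq_norm] using hxa k
        exact max_lt (by linarith) (by linarith)
      exact hball hd
    have hdet : (N x).det ≠ 0 := (hdx c (by simpa using half_pos hε)).1
    refine ⟨hLI x hdet, ε/2, by positivity, fun y hy => ?_⟩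
    obtain ⟨hy1, hy2⟩ := hy
    have hyP : y ∈ P := by
      have : affineSpan ℝ (Set.range x) ≤ P := by
        rw [hP]; exact affineSpan_le.mpr (Set.range_subset_iff.mpr hxP)
      exact this hy2
    have hWpos := (hdx y (by simpa [Metric.mem_ball] using hy1)).2
    exact mem_convexHull_of_exists_fintype (W x y) x (fun k => le_of_lt (hWpos k))
      (hWsum x y) (fun k => Set.mem_range_self k) (hA x hxP hdet y hyP)
  · -- degenerate case : c not in the affine span
    rw [Metric.eventually_nhds_iff] at h1
    obtain ⟨ε, hε, hball⟩ := h1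
    have hop : ∃ r > (0:ℝ), Metric.ball c r ∩ (P : Set X) = ∅ := by
      have hmem : (P : Set X)ᶜ ∈ nhds c := hPclosed.isOpen_compl.mem_nhds hcP
      obtain ⟨r, hr, hball'⟩ := Metric.mem_nhds_iff.1 hmem
      exact ⟨r, hr, Set.eq_empty_iff_forall_notMem.2 fun z hz => hball' hz.1 hz.2⟩
    obtain ⟨r, hr, hre⟩ := hop
    refine ⟨ε/2, by positivity, fun x hxP hxa => ?_⟩
    have hdet : (N x).det ≠ 0 := by
      have hd : dist x a < ε := by
        have hxa' : dist x a < ε / 2 :=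
          (dist_pi_lt_iff (half_pos hε)).2 fun k => by simpa [dist_eq_norm] using hxa k
        linarith
      exact hball hd
    refine ⟨hLI x hdet, r, hr, fun y hy => ?_⟩
    exfalso
    have : affineSpan ℝ (Set.range x) ≤ P := by
      rw [hP]; exact affineSpan_le.mpr (Set.range_subset_iff.mpr hxP)
    have : y ∈ Metric.ball c r ∩ (P : Set X) := ⟨hy.1, this hy.2⟩
    simp [hre] at this
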